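/- Define, for each integer k ≥ 1, B(k) = max( ∫₁^∞ (W_k(x) − 1)·φ(x; 1, 1/(2k)) dx , ∫_{−∞}^1 (1 − W_k(x))·φ(x; 1, 1/(2k)) dx ), where W_k(x) = exp(2k·[log x − (x − 1) + (1/2)·(x − 1)²]) for x > 0 and W_k(x) = 0 for x ≤ 0, and φ(x; 1, 1/(2k)) is the normal density with mean 1 and variance 1/(2k). Then B(k) → 0 as k → ∞. (Consequently, the total variation distance between the density proportional to 1{x>0}·x^(2k)·exp(−(x−μ)²/(2s²)) and its Laplace Gaussian approximation tends to zero, uniformly in μ and s, as the count k increases.) -/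

import Mathlib

open MeasureTheory Real Filter

/-- The density of the normal distribution with mean `μ` and variance `s2`:
`φ(x; μ, s²) = (2πs²)^(−1/2)·exp(−(x−μ)²/(2s²))`. -/
noncomputable def normalPDF (μ s2 x : ℝ) : ℝ :=
  (2 * Real.pi * s2) ^ (-(1:ℝ)/2) * Real.exp (-(x - μ) ^ 2 / (2 * s2))

/-- `W_k(x) = exp(2k·[log x − (x − 1) + (1/2)·(x − 1)²])` for `x > 0` and `0` for `x ≤ 0`. -/
noncomputable def Wfun (k : ℕ) (x : ℝ) : ℝ :=
  if 0 < x then Real.exp (2 * k * (Real.log x - (x - 1) + (1/2) * (x - 1) ^ 2)) else 0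

lemma aux_two_log_le {y : ℝ} (hy : 1 ≤ y) : 2 * Real.log y ≤ y - y⁻¹ := by
  set f : ℝ → ℝ := fun z => z - z⁻¹ - 2 * Real.log z with hf
  have hd : ∀ z ∈ Set.Ioi (1:ℝ), HasDerivAt f (1 - (-(z^2)⁻¹) - 2 * z⁻¹) z := by
    intro z hz
    have hz1 : (1:ℝ) < z := hz
    have hz0 : z ≠ 0 := by linarith
    exact ((hasDerivAt_id z).sub (hasDerivAt_inv hz0)).sub
      ((Real.hasDerivAt_log hz0).const_mul 2)
  have hsub : Set.Ici (1:ℝ) ⊆ {(0:ℝ)}ᶜ := by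
    intro z hz
    simp only [Set.mem_compl_iff, Set.mem_singleton_iff]
    have : (1:ℝ) ≤ z := hz
    intro h; rw [h] at this; linarith
  have hmono : MonotoneOn f (Set.Ici 1) := by
    apply monotoneOn_of_deriv_nonneg (convex_Ici 1)
    · apply ContinuousOn.sub
      · exact continuousOn_id.sub (continuousOn_inv₀.mono hsub)
      · exact continuousOn_const.mul (Real.continuousOn_log.mono hsub)
    · intro z hz
      rw [interior_Ici] at hz
      exact (hd z hz).differentiableAt.differentiableWithinAt
    · intro z hz
      rw [interior_Ici] at hz
      rw [(hd z hz).deriv]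
      have hz1 : (1:ℝ) < z := hz
      have hz0 : (0:ℝ) < z := by linarith
      have hzz : z⁻¹ * z = 1 := inv_mul_cancel₀ (by positivity)
      have hzz2 : (z^2)⁻¹ * z^2 = 1 := inv_mul_cancel₀ (by positivity)
      nlinarith [sq_nonneg (1 - z⁻¹), inv_pos.mpr hz0, sq_nonneg z⁻¹,
        inv_pos.mpr (pow_pos hz0 2)]
  have h0 : f 1 ≤ f y := hmono (by simp) hy hy
  have h1 : f 1 = 0 := by simp [hf]
  rw [h1] at h0
  simp only [hf] at h0
  linarith

lemma aux_log_le_pos {h : ℝ} (h0 : 0 ≤ h) :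
    Real.log (1 + h) - h ≤ -(h^2 / (2 * (1 + h))) := by
  have h1p : (0:ℝ) < 1 + h := by linarith
  have key := aux_two_log_le (by linarith : (1:ℝ) ≤ 1 + h)
  have e : (1 + h) - (1 + h)⁻¹ = 2 * (h - h^2 / (2 * (1 + h))) := by
    field_simp; ring
  rw [e] at key
  linarith

lemma aux_log_le_neg {h : ℝ} (hm : -1 < h) (h0 : h ≤ 0) :
    Real.log (1 + h) ≤ h - h^2 / 2 := by
  set f : ℝ → ℝ := fun z => z - z^2/2 - Real.log (1 + z) with hf
  have hd : ∀ z ∈ Set.Ioo (-1:ℝ) 0, HasDerivAt f (1 - z - (1 + z)⁻¹) z := by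
    intro z hz
    have hz0 : 1 + z ≠ 0 := by have := hz.1; intro h; linarith
    have hlog : HasDerivAt (fun z : ℝ => Real.log (1 + z)) ((1 + z)⁻¹ * 1) z :=
      (Real.hasDerivAt_log hz0).comp z ((hasDerivAt_id z).const_add 1)
    have hpow : HasDerivAt (fun z : ℝ => z^2/2) ((2:ℕ) * z^(2-1) / 2) z :=
      (hasDerivAt_pow 2 z).div_const 2
    have := ((hasDerivAt_id z).sub hpow).sub hlog
    have e : (1 - z - (1 + z)⁻¹) = 1 - ((2:ℕ):ℝ) * z^(2-1) / 2 - (1 + z)⁻¹ * 1 := by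
      push_cast
      ring
    rw [e]; exact this
  have hanti : AntitoneOn f (Set.Ioc (-1:ℝ) 0) := by
    apply antitoneOn_of_deriv_nonpos (convex_Ioc (-1) 0)
    · apply ContinuousOn.sub
      · exact continuousOn_id.sub ((continuousOn_pow 2).div_const 2)
      · apply ContinuousOn.comp Real.continuousOn_log (by fun_prop)
        intro z hz
        simp only [Set.mem_compl_iff, Set.mem_singleton_iff]
        have := hz.1; intro h; linarith
    · intro z hz
      rw [interior_Ioc] at hz
      exact (hd z hz).differentiableAt.differentiableWithinAt
    · intro z hz
      rw [interior_Ioc] at hz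
      rw [(hd z hz).deriv]
      have h1p : (0:ℝ) < 1 + z := by linarith [hz.1]
      have := mul_inv_cancel₀ (ne_of_gt h1p)
      nlinarith [sq_nonneg z, inv_pos.mpr h1p]
  have h0' : f 0 ≤ f h := hanti ⟨hm, h0⟩ ⟨by norm_num, le_refl 0⟩ h0
  have h1 : f 0 = 0 := by simp [hf]
  rw [h1] at h0'
  simp only [hf] at h0'
  linarith

noncomputable def cc (k : ℕ) : ℝ := Real.sqrt (1 / (2 * k))

noncomputable def phiStd (t : ℝ) : ℝ := (2 * Real.pi) ^ (-(1:ℝ)/2) * Real.exp (-t ^ 2 / 2)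

lemma cc_nonneg (k : ℕ) : 0 ≤ cc k := Real.sqrt_nonneg _

lemma cc_pos {k : ℕ} (hk : 1 ≤ k) : 0 < cc k := by
  have : (0:ℝ) < 1 / (2 * k) := by positivity
  exact Real.sqrt_pos.mpr this

lemma cc_sq {k : ℕ} (hk : 1 ≤ k) : (cc k) ^ 2 = 1 / (2 * k) := by
  rw [cc, Real.sq_sqrt]; positivity

lemma cc_le_one {k : ℕ} (hk : 1 ≤ k) : cc k ≤ 1 := by
  have hk1 : (1:ℝ) ≤ (k:ℝ) := by exact_mod_cast hk
  have h1 : 1 / (2 * (k:ℝ)) ≤ 1 := by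
    rw [div_le_one (by positivity)]; linarith
  calc cc k ≤ Real.sqrt 1 := Real.sqrt_le_sqrt h1
  _ = 1 := Real.sqrt_one

lemma Wfun_nonneg (k : ℕ) (x : ℝ) : 0 ≤ Wfun k x := by
  rw [Wfun]; split
  · exact (Real.exp_pos _).le
  · exact le_refl 0

lemma Wfun_eq (k : ℕ) {h : ℝ} (hh : 0 < 1 + h) :
    Wfun k (1 + h) = Real.exp (2 * k * (Real.log (1 + h) - h + (1/2) * h ^ 2)) := by
  rw [Wfun, if_pos hh]
  congr 1
  ring

lemma phiStd_nonneg (t : ℝ) : 0 ≤ phiStd t := by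
  rw [phiStd]; positivity

lemma continuous_phiStd : Continuous phiStd := by
  unfold phiStd; fun_prop

lemma measurable_Wfun (k : ℕ) : Measurable (Wfun k) := by
  unfold Wfun
  apply Measurable.ite (measurableSet_lt measurable_const measurable_id)
  · exact (Real.measurable_exp.comp
      ((measurable_const.mul
        (((Real.measurable_log.sub (measurable_id.sub measurable_const)).add
          (measurable_const.mul ((measurable_id.sub measurable_const).pow measurable_const)))))))
  · exact measurable_const

-- main estimate on Ioi
lemma key_pos {k : ℕ} (hk : 1 ≤ k) {t : ℝ} (ht : 0 < t) :
    Wfun k (1 + cc k * t) * Real.exp (-t ^ 2 / 2) ≤ Real.exp (1/2 - t/4) := by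
  set h := cc k * t with hh
  have hk0 : (0:ℝ) < (k:ℝ) := by exact_mod_cast hk
  have hh0 : 0 ≤ h := mul_nonneg (cc_nonneg k) ht.le
  have h1p : (0:ℝ) < 1 + h := by linarith
  have hhs : (k:ℝ) * h ^ 2 = t ^ 2 / 2 := by
    rw [hh, mul_pow, cc_sq hk]; field_simp
  have hht : h ≤ t := by
    rw [hh]
    calc cc k * t ≤ 1 * t := mul_le_mul_of_nonneg_right (cc_le_one hk) ht.le
    _ = t := one_mul t
  rw [Wfun_eq k h1p, ← Real.exp_add]
  apply Real.exp_le_exp.mpr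
  have l1 := aux_log_le_pos hh0
  have s1 : 2 * (k:ℝ) * (Real.log (1 + h) - h) ≤ 2 * (k:ℝ) * (-(h^2 / (2 * (1 + h)))) :=
    mul_le_mul_of_nonneg_left l1 (by positivity)
  have s2 : 2 * (k:ℝ) * (-(h^2 / (2 * (1 + h)))) = -((t^2/2) / (1 + h)) := by
    rw [← hhs]; field_simp
  have s3 : (t^2/2) / (1 + t) ≤ (t^2/2) / (1 + h) :=
    div_le_div_of_nonneg_left (by positivity) h1p (by linarith)
  have s4 : t/4 - 1/2 ≤ (t^2/2) / (1 + t) := by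
    rw [le_div_iff₀ (by linarith : (0:ℝ) < 1 + t)]; nlinarith
  nlinarith [s1, s2, s3, s4, hhs]

lemma key_neg (k : ℕ) {t : ℝ} (ht : t ≤ 0) : Wfun k (1 + cc k * t) ≤ 1 := by
  set h := cc k * t with hh
  have hh0 : h ≤ 0 := mul_nonpos_of_nonneg_of_nonpos (cc_nonneg k) ht
  by_cases hp : 0 < 1 + h
  · rw [Wfun_eq k hp]
    rw [Real.exp_le_one_iff]
    have hm : -1 < h := by linarith
    have := aux_log_le_neg hm hh0
    have h2 : Real.log (1 + h) - h + (1/2) * h ^ 2 ≤ 0 := by nlinarith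
    have : (0:ℝ) ≤ 2 * (k:ℝ) := by positivity
    nlinarith
  · rw [Wfun, if_neg (by push_neg at hp ⊢; linarith)]
    norm_num

lemma tendsto_cc : Tendsto (fun k : ℕ => cc k) atTop (nhds 0) := by
  have h1 : Tendsto (fun k : ℕ => 2 * (k:ℝ)) atTop atTop :=
    (tendsto_natCast_atTop_atTop).const_mul_atTop two_pos
  have h2 : Tendsto (fun k : ℕ => (2 * (k:ℝ))⁻¹) atTop (nhds 0) :=
    h1.inv_tendsto_atTop
  have h3 := (Real.continuous_sqrt.tendsto 0).comp h2
  rw [Real.sqrt_zero] at h3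
  refine h3.congr fun k => ?_
  simp [cc, Function.comp, one_div]

lemma tendsto_W (t : ℝ) :
    Tendsto (fun k : ℕ => Wfun k (1 + cc k * t)) atTop (nhds 1) := by
  have hcc := tendsto_cc
  have hh : Tendsto (fun k : ℕ => cc k * t) atTop (nhds 0) := by
    simpa using hcc.mul_const t
  have hsmall : ∀ᶠ k : ℕ in atTop, |cc k * t| < 1/2 := by
    have := Metric.tendsto_nhds.mp hh (1/2) (by norm_num)
    simpa only [Real.dist_eq, sub_zero] using this
  set E : ℕ → ℝ :=
    fun k => 2*(k:ℝ)*(Real.log (1 + cc k * t) - cc k * t + (1/2)*(cc k * t)^2) with hEdef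
  have hEbound : ∀ᶠ k : ℕ in atTop, ‖E k‖ ≤ 2 * cc k * |t|^3 := by
    filter_upwards [hsmall, eventually_ge_atTop 1] with k hks hk1
    set h := cc k * t with hhd
    have hk0 : (0:ℝ) < (k:ℝ) := by exact_mod_cast hk1
    have hx : |(-h)| < 1 := by rw [abs_neg]; linarith [abs_nonneg h]
    have key := Real.abs_log_sub_add_sum_range_le hx 2
    have hsum : (∑ i ∈ Finset.range 2, (-h)^(i+1)/((i:ℝ)+1)) = -h + h^2/2 := by
      rw [Finset.sum_range_succ, Finset.sum_range_succ, Finset.sum_range_zero]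
      norm_num
    rw [hsum] at key
    simp only [abs_neg, sub_neg_eq_add] at key
    have hre : Real.log (1 + h) - h + (1/2)*h^2 = (-h + h^2/2) + Real.log (1 + h) := by ring
    have habs2 : |Real.log (1 + h) - h + (1/2)*h^2| ≤ |h|^3 / (1 - |h|) := by
      rw [hre]; exact key
    have hd2 : |h|^3 / (1 - |h|) ≤ 2 * |h|^3 := by
      have h12 : (1:ℝ)/2 ≤ 1 - |h| := by linarith [hks]
      calc |h|^3 / (1 - |h|) ≤ |h|^3 / (1/2) :=
            div_le_div_of_nonneg_left (by positivity) (by norm_num) h12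
      _ = 2 * |h|^3 := by ring
    have e3 : |h|^3 = (cc k)^3 * |t|^3 := by
      rw [hhd, abs_mul, mul_pow, abs_of_nonneg (cc_nonneg k)]
    have e4 : 2*(k:ℝ) * (2 * ((cc k)^3 * |t|^3)) = 2 * cc k * |t|^3 := by
      have hsq := cc_sq hk1
      have : (cc k)^3 = (1/(2*(k:ℝ))) * cc k := by
        rw [show (cc k)^3 = (cc k)^2 * cc k from by ring, hsq]
      rw [this]; field_simp
    rw [Real.norm_eq_abs, hEdef]
    calc |2*(k:ℝ)*(Real.log (1 + h) - h + (1/2)*h^2)|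
        = 2*(k:ℝ) * |Real.log (1 + h) - h + (1/2)*h^2| := by
          rw [abs_mul, abs_of_nonneg (by positivity : (0:ℝ) ≤ 2*(k:ℝ))]
    _ ≤ 2*(k:ℝ) * (2 * |h|^3) := by
          apply mul_le_mul_of_nonneg_left (le_trans habs2 hd2) (by positivity)
    _ = 2 * cc k * |t|^3 := by rw [e3]; exact e4
  have hEto : Tendsto E atTop (nhds 0) := by
    apply squeeze_zero_norm' hEbound
    have := (hcc.const_mul (2:ℝ)).mul_const (|t|^3)
    simpa using this
  have hWE : ∀ᶠ k : ℕ in atTop, Wfun k (1 + cc k * t) = Real.exp (E k) := by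
    filter_upwards [hsmall] with k hks
    have hlt := abs_lt.mp hks
    have : 0 < 1 + cc k * t := by linarith [hlt.1]
    exact Wfun_eq k this
  have hto := (Real.continuous_exp.tendsto 0).comp hEto
  rw [Real.exp_zero] at hto
  exact Tendsto.congr' (by filter_upwards [hWE] with k hk; exact hk.symm) hto

lemma cov_Ioi {k : ℕ} (hk : 1 ≤ k) (F : ℝ → ℝ) :
    ∫ x in Set.Ioi (1:ℝ), F x = ∫ t in Set.Ioi (0:ℝ), cc k * F (1 + cc k * t) := by
  have hc := cc_pos hk
  have himg : (fun t : ℝ => 1 + cc k * t) '' Set.Ioi 0 = Set.Ioi 1 := by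
    ext y
    simp only [Set.mem_image, Set.mem_Ioi]
    constructor
    · rintro ⟨s, hs, rfl⟩; nlinarith
    · intro hy
      refine ⟨(y - 1)/cc k, div_pos (by linarith) hc, ?_⟩
      field_simp
      ring
  have hder : ∀ s ∈ Set.Ioi (0:ℝ),
      HasDerivWithinAt (fun t : ℝ => 1 + cc k * t) (cc k) (Set.Ioi 0) s := by
    intro s _
    have h1 : HasDerivAt (fun t : ℝ => 1 + cc k * t) (cc k * 1) s :=
      ((hasDerivAt_id s).const_mul (cc k)).const_add 1
    simpa using h1.hasDerivWithinAt
  have hinj : Set.InjOn (fun t : ℝ => 1 + cc k * t) (Set.Ioi 0) := by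
    intro a _ b _ hab
    simp only at hab
    have : cc k * a = cc k * b := by linarith
    exact mul_left_cancel₀ hc.ne' this
  rw [← himg, integral_image_eq_integral_abs_deriv_smul measurableSet_Ioi hder hinj F]
  simp only [smul_eq_mul, abs_of_pos hc]

lemma cov_Iic {k : ℕ} (hk : 1 ≤ k) (F : ℝ → ℝ) :
    ∫ x in Set.Iic (1:ℝ), F x = ∫ t in Set.Iic (0:ℝ), cc k * F (1 + cc k * t) := by
  have hc := cc_pos hk
  have himg : (fun t : ℝ => 1 + cc k * t) '' Set.Iic 0 = Set.Iic 1 := by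
    ext y
    simp only [Set.mem_image, Set.mem_Iic]
    constructor
    · rintro ⟨s, hs, rfl⟩; nlinarith
    · intro hy
      refine ⟨(y - 1)/cc k, ?_, ?_⟩
      · exact div_nonpos_of_nonpos_of_nonneg (by linarith) hc.le
      · field_simp
        ring
  have hder : ∀ s ∈ Set.Iic (0:ℝ),
      HasDerivWithinAt (fun t : ℝ => 1 + cc k * t) (cc k) (Set.Iic 0) s := by
    intro s _
    have h1 : HasDerivAt (fun t : ℝ => 1 + cc k * t) (cc k * 1) s :=
      ((hasDerivAt_id s).const_mul (cc k)).const_add 1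
    simpa using h1.hasDerivWithinAt
  have hinj : Set.InjOn (fun t : ℝ => 1 + cc k * t) (Set.Iic 0) := by
    intro a _ b _ hab
    simp only at hab
    have : cc k * a = cc k * b := by linarith
    exact mul_left_cancel₀ hc.ne' this
  rw [← himg, integral_image_eq_integral_abs_deriv_smul measurableSet_Iic hder hinj F]
  simp only [smul_eq_mul, abs_of_pos hc]

lemma scale_eq {k : ℕ} (hk : 1 ≤ k) (t : ℝ) :
    cc k * normalPDF 1 (1 / (2 * (k:ℝ))) (1 + cc k * t) = phiStd t := by
  have hk0 : (0:ℝ) < (k:ℝ) := by exact_mod_cast hk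
  have hs2 : (0:ℝ) < 1 / (2 * (k:ℝ)) := by positivity
  rw [normalPDF, phiStd]
  have e1 : (1 + cc k * t - 1) = cc k * t := by ring
  rw [e1]
  have e2 : -(cc k * t)^2 / (2 * (1/(2*(k:ℝ)))) = -t^2/2 := by
    rw [mul_pow, cc_sq hk]; field_simp
  rw [e2]
  have e3 : (2*Real.pi*(1/(2*(k:ℝ))))^(-(1:ℝ)/2)
      = (2*Real.pi)^(-(1:ℝ)/2) * (1/(2*(k:ℝ)))^(-(1:ℝ)/2) :=
    Real.mul_rpow (by positivity) (by positivity)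
  rw [e3]
  have e4 : cc k = (1/(2*(k:ℝ)))^((1:ℝ)/2) := by
    rw [cc, Real.sqrt_eq_rpow]
  have e5 : (1/(2*(k:ℝ)))^((1:ℝ)/2) * (1/(2*(k:ℝ)))^(-(1:ℝ)/2) = 1 := by
    rw [← Real.rpow_add hs2]; norm_num
  rw [e4]
  calc (1/(2*(k:ℝ)))^((1:ℝ)/2) *
        ((2*Real.pi)^(-(1:ℝ)/2) * (1/(2*(k:ℝ)))^(-(1:ℝ)/2) * Real.exp (-t^2/2))
      = ((1/(2*(k:ℝ)))^((1:ℝ)/2) * (1/(2*(k:ℝ)))^(-(1:ℝ)/2)) *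
        ((2*Real.pi)^(-(1:ℝ)/2) * Real.exp (-t^2/2)) := by ring
  _ = (2*Real.pi)^(-(1:ℝ)/2) * Real.exp (-t^2/2) := by rw [e5, one_mul]

lemma tendstoA :
    Tendsto (fun k : ℕ => ∫ t in Set.Ioi (0:ℝ), (Wfun k (1 + cc k * t) - 1) * phiStd t)
      atTop (nhds 0) := by
  rw [(by simp : nhds (0:ℝ) = nhds (∫ _ in Set.Ioi (0:ℝ), (0:ℝ)))]
  apply tendsto_integral_filter_of_dominated_convergence
      (fun t => (2 * (2*Real.pi)^(-(1:ℝ)/2) * Real.exp (1/2)) * Real.exp (-(1/4)*t))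
  · apply Eventually.of_forall
    intro k
    apply Measurable.aestronglyMeasurable
    exact (((measurable_Wfun k).comp
      (measurable_const.add (measurable_id.const_mul (cc k)))).sub measurable_const).mul
      continuous_phiStd.measurable
  · filter_upwards [eventually_ge_atTop 1] with k hk
    rw [ae_restrict_iff' measurableSet_Ioi]
    apply Eventually.of_forall
    intro t ht
    rw [Set.mem_Ioi] at ht
    have hb1 := key_pos hk ht
    have hb2 : Real.exp (-t^2/2) ≤ Real.exp (1/2 - t/4) := by
      apply Real.exp_le_exp.mpr; nlinarith
    have hW0 := Wfun_nonneg k (1 + cc k * t)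
    have hc0 : (0:ℝ) ≤ (2*Real.pi)^(-(1:ℝ)/2) := by positivity
    rw [Real.norm_eq_abs, abs_mul, abs_of_nonneg (phiStd_nonneg t)]
    have habs : |Wfun k (1 + cc k * t) - 1| ≤ Wfun k (1 + cc k * t) + 1 := by
      rw [abs_le]; constructor <;> linarith
    have hexp : Real.exp (1/2 - t/4) = Real.exp (1/2) * Real.exp (-(1/4)*t) := by
      rw [← Real.exp_add]; congr 1; ring
    calc |Wfun k (1 + cc k * t) - 1| * phiStd t
        ≤ (Wfun k (1 + cc k * t) + 1) * phiStd t :=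
          mul_le_mul_of_nonneg_right habs (phiStd_nonneg t)
    _ = (2*Real.pi)^(-(1:ℝ)/2) *
          (Wfun k (1 + cc k * t) * Real.exp (-t^2/2) + Real.exp (-t^2/2)) := by
          rw [phiStd]; ring
    _ ≤ (2*Real.pi)^(-(1:ℝ)/2) * (Real.exp (1/2 - t/4) + Real.exp (1/2 - t/4)) :=
          mul_le_mul_of_nonneg_left (by linarith) hc0
    _ = (2 * (2*Real.pi)^(-(1:ℝ)/2) * Real.exp (1/2)) * Real.exp (-(1/4)*t) := by
          rw [hexp]; ring
  · exact (exp_neg_integrableOn_Ioi 0 (by norm_num : (0:ℝ) < 1/4)).const_mul _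
  · apply Eventually.of_forall
    intro t
    have := ((tendsto_W t).sub (tendsto_const_nhds : Tendsto (fun _ : ℕ => (1:ℝ)) atTop (nhds 1))).mul_const (phiStd t)
    simpa using this

lemma tendstoB :
    Tendsto (fun k : ℕ => ∫ t in Set.Iic (0:ℝ), (1 - Wfun k (1 + cc k * t)) * phiStd t)
      atTop (nhds 0) := by
  rw [(by simp : nhds (0:ℝ) = nhds (∫ _ in Set.Iic (0:ℝ), (0:ℝ)))]
  apply tendsto_integral_filter_of_dominated_convergence (fun t => phiStd t)
  · apply Eventually.of_forall
    intro k
    apply Measurable.aestronglyMeasurable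
    exact (measurable_const.sub ((measurable_Wfun k).comp
      (measurable_const.add (measurable_id.const_mul (cc k))))).mul
      continuous_phiStd.measurable
  · apply Eventually.of_forall
    intro k
    rw [ae_restrict_iff' measurableSet_Iic]
    apply Eventually.of_forall
    intro t ht
    rw [Set.mem_Iic] at ht
    have hW1 := key_neg k ht
    have hW0 := Wfun_nonneg k (1 + cc k * t)
    rw [Real.norm_eq_abs, abs_mul, abs_of_nonneg (phiStd_nonneg t)]
    have habs : |1 - Wfun k (1 + cc k * t)| ≤ 1 := by
      rw [abs_le]; constructor <;> linarith
    calc |1 - Wfun k (1 + cc k * t)| * phiStd t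
        ≤ 1 * phiStd t := mul_le_mul_of_nonneg_right habs (phiStd_nonneg t)
    _ = phiStd t := one_mul _
  · have h1 : Integrable (fun t : ℝ => Real.exp (-(1/2) * t^2)) :=
      integrable_exp_neg_mul_sq (by norm_num)
    have heq : phiStd = fun t : ℝ => (2*Real.pi)^(-(1:ℝ)/2) * Real.exp (-(1/2) * t^2) := by
      funext t
      rw [phiStd]
      congr 1
      ring
    have h2 : Integrable phiStd := by rw [heq]; exact h1.const_mul _
    exact h2.integrableOn
  · apply Eventually.of_forall
    intro t
    have := (((tendsto_const_nhds : Tendsto (fun _ : ℕ => (1:ℝ)) atTop (nhds 1))).sub (tendsto_W t)).mul_const (phiStd t)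
    simpa using this

set_option maxHeartbeats 1000000 in
/-- The total variation bound
`B(k) = max(∫₁^∞ (W_k−1)·φ(·;1,1/(2k)), ∫_{−∞}^1 (1−W_k)·φ(·;1,1/(2k)))`
tends to `0` as `k → ∞`. -/
theorem stmt15 :
    Tendsto
      (fun k : ℕ =>
        max (∫ x in Set.Ioi (1:ℝ), (Wfun k x - 1) * normalPDF 1 (1 / (2 * k)) x)
            (∫ x in Set.Iic (1:ℝ), (1 - Wfun k x) * normalPDF 1 (1 / (2 * k)) x))
      atTop (nhds 0) := by
  have h := tendstoA.max tendstoB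
  rw [max_self] at h
  apply Tendsto.congr' _ h
  filter_upwards [eventually_ge_atTop 1] with k hk
  have hIoi : (∫ x in Set.Ioi (1:ℝ), (Wfun k x - 1) * normalPDF 1 (1 / (2 * k)) x)
      = ∫ t in Set.Ioi (0:ℝ), (Wfun k (1 + cc k * t) - 1) * phiStd t := by
    rw [cov_Ioi hk (fun x => (Wfun k x - 1) * normalPDF 1 (1 / (2 * k)) x)]
    refine setIntegral_congr_fun measurableSet_Ioi fun t _ => ?_
    rw [← scale_eq hk t]
    ring
  have hIic : (∫ x in Set.Iic (1:ℝ), (1 - Wfun k x) * normalPDF 1 (1 / (2 * k)) x)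
      = ∫ t in Set.Iic (0:ℝ), (1 - Wfun k (1 + cc k * t)) * phiStd t := by
    rw [cov_Iic hk (fun x => (1 - Wfun k x) * normalPDF 1 (1 / (2 * k)) x)]
    refine setIntegral_congr_fun measurableSet_Iic fun t _ => ?_
    rw [← scale_eq hk t]
    ring
  rw [hIoi, hIic]
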